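/- Let X be a quandle, Y a hierarchical quandle over X, V_n the free K-module on Y^n × X^n, with l_n = Σ (-1)^{i+1} λ_{n,i} (where λ_{n,i} acts entries 1..i-1 by the hierarchical quandle operation with the i-th entry and deletes the i-th entry) and r_n = Σ (-1)^{i+1} ρ_{n,i} (where ρ_{n,i} deletes the i-th entry). Then l_{n-1} ∘ r_n + r_{n-1} ∘ l_n = 0 for all n ≥ 1. -/
import Mathlib


namespace Stmt7

variable {X Y : Type*}

/-- The free `K`-module `V_n` on tuples in `Y^n × X^n`. -/
abbrev V (K : Type*) [CommRing K] (X Y : Type*) (n : ℕ) : Type _ :=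
  ((Fin n → Y) × (Fin n → X)) →₀ K

/-- `λ_{n,i}` on generators: act on the entries before `i` by the `i`-th entry
and delete the `i`-th entry. -/
def lamTup (qop : X → X → X) (hop : X → X → Y → Y → Y) {n : ℕ} (i : Fin (n + 1))
    (t : (Fin (n + 1) → Y) × (Fin (n + 1) → X)) : (Fin n → Y) × (Fin n → X) :=
  (fun j => if (j : ℕ) < (i : ℕ)
      then hop (t.2 j.castSucc) (t.2 i) (t.1 j.castSucc) (t.1 i)
      else t.1 j.succ,
   fun j => if (j : ℕ) < (i : ℕ) then qop (t.2 j.castSucc) (t.2 i) else t.2 j.succ)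

/-- `ρ_{n,i}` on generators: delete the `i`-th entries of both tuples. -/
def rhoTup {n : ℕ} (i : Fin (n + 1))
    (t : (Fin (n + 1) → Y) × (Fin (n + 1) → X)) : (Fin n → Y) × (Fin n → X) :=
  (fun j => t.1 (i.succAbove j), fun j => t.2 (i.succAbove j))

/-- The linear map `λ_{n,i} : V_{n+1} → V_n`. -/
noncomputable def lamMap (K : Type*) [CommRing K] (qop : X → X → X)
    (hop : X → X → Y → Y → Y) (n : ℕ) (i : Fin (n + 1)) :
    V K X Y (n + 1) →ₗ[K] V K X Y n :=
  Finsupp.lmapDomain K K (lamTup qop hop i)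

/-- The linear map `ρ_{n,i} : V_{n+1} → V_n`. -/
noncomputable def rhoMap (K : Type*) [CommRing K] (n : ℕ) (i : Fin (n + 1)) :
    V K X Y (n + 1) →ₗ[K] V K X Y n :=
  Finsupp.lmapDomain K K (rhoTup i)

/-- `l_n = Σ_i (-1)^{i+1} λ_{n,i}` (written with `0`-based indices). -/
noncomputable def lMap (K : Type*) [CommRing K] (qop : X → X → X)
    (hop : X → X → Y → Y → Y) (n : ℕ) : V K X Y (n + 1) →ₗ[K] V K X Y n :=
  ∑ i : Fin (n + 1), ((-1 : K) ^ (i : ℕ)) • lamMap K qop hop n i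

/-- `r_n = Σ_i (-1)^{i+1} ρ_{n,i}` (written with `0`-based indices). -/
noncomputable def rMap (K : Type*) [CommRing K] (n : ℕ) :
    V K X Y (n + 1) →ₗ[K] V K X Y n :=
  ∑ i : Fin (n + 1), ((-1 : K) ^ (i : ℕ)) • rhoMap (X := X) (Y := Y) K n i


lemma val_succAbove {n : ℕ} (p : Fin (n+1)) (k : Fin n) :
    (p.succAbove k : ℕ) = if (k:ℕ) < (p:ℕ) then (k:ℕ) else (k:ℕ)+1 := by
  simp only [Fin.succAbove, apply_ite Fin.val, Fin.coe_castSucc, Fin.val_succ, Fin.lt_def]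

lemma tup_lt (qop : X → X → X) (hop : X → X → Y → Y → Y) {n : ℕ}
    (i : Fin (n+1)) (j : Fin (n+2)) (h : (i:ℕ) < (j:ℕ)) :
    lamTup qop hop i ∘ rhoTup j =
      rhoTup (⟨(j:ℕ)-1, by have := j.isLt; omega⟩ : Fin (n+1)) ∘
        lamTup qop hop (⟨(i:ℕ), by have := i.isLt; omega⟩ : Fin (n+2)) := by
  funext t
  apply Prod.ext <;> funext k <;>
    simp only [lamTup, rhoTup, Function.comp_apply, val_succAbove] <;>
    (split_ifs <;>
      first
        | omega
        | (congr <;>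
            first
              | rfl
              | (apply congrArg <;> apply Fin.ext <;>
                  simp only [val_succAbove, Fin.coe_castSucc, Fin.val_succ] <;>
                  split_ifs <;> omega)))

lemma tup_ge (qop : X → X → X) (hop : X → X → Y → Y → Y) {n : ℕ}
    (i : Fin (n+1)) (j : Fin (n+2)) (h : (j:ℕ) ≤ (i:ℕ)) :
    lamTup qop hop i ∘ rhoTup j =
      rhoTup (⟨(j:ℕ), by have := i.isLt; omega⟩ : Fin (n+1)) ∘
        lamTup qop hop i.succ := by
  funext t
  apply Prod.ext <;> funext k <;>
    simp only [lamTup, rhoTup, Function.comp_apply, val_succAbove, Fin.val_succ] <;>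
    (split_ifs <;>
      first
        | omega
        | (congr <;>
            first
              | rfl
              | (apply congrArg <;> apply Fin.ext <;>
                  simp only [val_succAbove, Fin.coe_castSucc, Fin.val_succ] <;>
                  split_ifs <;> omega)))

lemma map_comm (K : Type*) [CommRing K] (qop : X → X → X) (hop : X → X → Y → Y → Y)
    {n : ℕ} (i : Fin (n+1)) (j : Fin (n+2)) (j' : Fin (n+1)) (i' : Fin (n+2))
    (h : lamTup (X := X) (Y := Y) qop hop i ∘ rhoTup j = rhoTup j' ∘ lamTup qop hop i') :
    (lamMap K qop hop n i).comp (rhoMap K (n+1) j) =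
      (rhoMap (X := X) (Y := Y) K n j').comp (lamMap K qop hop (n+1) i') := by
  rw [lamMap, rhoMap, lamMap, rhoMap, ← Finsupp.lmapDomain_comp, ← Finsupp.lmapDomain_comp, h]

/-- The pairing of indices used to cancel terms. -/
def pairFun (n : ℕ) (p : Fin (n+1) × Fin (n+2)) : Fin (n+1) × Fin (n+2) :=
  if h : (p.1:ℕ) < (p.2:ℕ) then
    (⟨(p.2:ℕ)-1, by have := p.2.isLt; omega⟩, ⟨(p.1:ℕ), by have := p.1.isLt; omega⟩)
  else (⟨(p.2:ℕ), by have := p.1.isLt; omega⟩, p.1.succ)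

def pairInv (n : ℕ) (p : Fin (n+1) × Fin (n+2)) : Fin (n+1) × Fin (n+2) :=
  if h : (p.2:ℕ) ≤ (p.1:ℕ) then
    (⟨(p.2:ℕ), by have := p.1.isLt; omega⟩, ⟨(p.1:ℕ)+1, by have := p.1.isLt; omega⟩)
  else (⟨(p.2:ℕ)-1, by have := p.2.isLt; omega⟩, ⟨(p.1:ℕ), by have := p.1.isLt; omega⟩)

lemma pairFun_of_lt {n : ℕ} {i : Fin (n+1)} {j : Fin (n+2)} (h : (i:ℕ) < (j:ℕ)) :
    pairFun n (i, j) = (⟨(j:ℕ)-1, by have := j.isLt; omega⟩,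
      ⟨(i:ℕ), by have := i.isLt; omega⟩) := dif_pos h

lemma pairFun_of_ge {n : ℕ} {i : Fin (n+1)} {j : Fin (n+2)} (h : ¬ (i:ℕ) < (j:ℕ)) :
    pairFun n (i, j) = (⟨(j:ℕ), by have := i.isLt; omega⟩, i.succ) := dif_neg h

lemma pairInv_of_le {n : ℕ} {a : Fin (n+1)} {b : Fin (n+2)} (h : (b:ℕ) ≤ (a:ℕ)) :
    pairInv n (a, b) = (⟨(b:ℕ), by have := a.isLt; omega⟩,
      ⟨(a:ℕ)+1, by have := a.isLt; omega⟩) := dif_pos h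

lemma pairInv_of_gt {n : ℕ} {a : Fin (n+1)} {b : Fin (n+2)} (h : ¬ (b:ℕ) ≤ (a:ℕ)) :
    pairInv n (a, b) = (⟨(b:ℕ)-1, by have := b.isLt; omega⟩,
      ⟨(a:ℕ), by have := a.isLt; omega⟩) := dif_neg h

def pairEquiv (n : ℕ) : Fin (n+1) × Fin (n+2) ≃ Fin (n+1) × Fin (n+2) where
  toFun := pairFun n
  invFun := pairInv n
  left_inv p := by
    rcases p with ⟨i, j⟩
    by_cases h : (i:ℕ) < (j:ℕ)
    · rw [pairFun_of_lt h,
        pairInv_of_le (n := n) (a := ⟨(j:ℕ)-1, by have := j.isLt; omega⟩)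
          (b := ⟨(i:ℕ), by have := i.isLt; omega⟩) (show (i:ℕ) ≤ (j:ℕ)-1 from by omega)]
      exact Prod.ext (Fin.ext rfl) (Fin.ext (show (j:ℕ)-1+1 = (j:ℕ) from by omega))
    · rw [pairFun_of_ge h,
        pairInv_of_gt (n := n) (a := ⟨(j:ℕ), by have := i.isLt; omega⟩) (b := i.succ)
          (show ¬((i:ℕ)+1 ≤ (j:ℕ)) from by omega)]
      exact Prod.ext (Fin.ext (show (i:ℕ)+1-1 = (i:ℕ) from by omega)) (Fin.ext rfl)
  right_inv p := by
    rcases p with ⟨a, b⟩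
    by_cases h : (b:ℕ) ≤ (a:ℕ)
    · rw [pairInv_of_le h,
        pairFun_of_lt (n := n) (i := ⟨(b:ℕ), by have := a.isLt; omega⟩)
          (j := ⟨(a:ℕ)+1, by have := a.isLt; omega⟩) (show (b:ℕ) < (a:ℕ)+1 from by omega)]
      exact Prod.ext (Fin.ext (show (a:ℕ)+1-1 = (a:ℕ) from by omega)) (Fin.ext rfl)
    · rw [pairInv_of_gt h,
        pairFun_of_ge (n := n) (i := ⟨(b:ℕ)-1, by have := b.isLt; omega⟩)
          (j := ⟨(a:ℕ), by have := a.isLt; omega⟩) (show ¬((b:ℕ)-1 < (a:ℕ)) from by omega)]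
      exact Prod.ext (Fin.ext rfl) (Fin.ext (show (b:ℕ)-1+1 = (b:ℕ) from by omega))

/-- `l_{n-1} ∘ r_n + r_{n-1} ∘ l_n = 0` for all `n ≥ 1`. -/
theorem l_r_anticommute (K : Type*) [CommRing K] (qop : X → X → X) (hop : X → X → Y → Y → Y)
    (qidem : ∀ x, qop x x = x)
    (qbij : ∀ a, Function.Bijective fun x => qop x a)
    (qdistrib : ∀ x1 x2 x3, qop (qop x1 x2) x3 = qop (qop x1 x3) (qop x2 x3))
    (hidem : ∀ x y, hop x x y y = y)
    (hbij : ∀ x1 x2 (a : Y), Function.Bijective fun y => hop x1 x2 y a)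
    (hdistrib : ∀ x1 x2 x3 (y1 y2 y3 : Y),
      hop (qop x1 x2) x3 (hop x1 x2 y1 y2) y3 =
        hop (qop x1 x3) (qop x2 x3) (hop x1 x3 y1 y3) (hop x2 x3 y2 y3))
    (n : ℕ) :
    (lMap K qop hop n).comp (rMap K (n + 1)) +
      (rMap K n).comp (lMap K qop hop (n + 1)) = 0 := by
  classical
  have sum_comp : ∀ {m k : ℕ} {ι : Type} [Fintype ι]
      (f : ι → (V K X Y m →ₗ[K] V K X Y k)) (g : V K X Y (m+1) →ₗ[K] V K X Y m),
      (∑ i : ι, f i).comp g = ∑ i : ι, (f i).comp g := by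
    intro m k ι _ f g
    ext x
    simp [LinearMap.sum_apply]
  have comp_sum : ∀ {m k : ℕ} {ι : Type} [Fintype ι]
      (g : V K X Y (m+1) →ₗ[K] V K X Y k) (f : ι → (V K X Y (m+2) →ₗ[K] V K X Y (m+1))),
      g.comp (∑ i : ι, f i) = ∑ i : ι, g.comp (f i) := by
    intro m k ι _ g f
    ext x
    simp [LinearMap.sum_apply]
  rw [lMap, rMap, rMap, lMap, sum_comp, sum_comp]
  simp only [comp_sum, LinearMap.smul_comp, LinearMap.comp_smul, smul_smul]
  have key : (∑ i : Fin (n+1), ∑ j : Fin (n+2),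
        ((-1:K) ^ (j:ℕ) * (-1:K) ^ (i:ℕ)) •
          (lamMap K qop hop n i).comp (rhoMap K (n+1) j)) +
      (∑ i : Fin (n+1), ∑ j : Fin (n+2),
        ((-1:K) ^ (j:ℕ) * (-1:K) ^ (i:ℕ)) •
          (rhoMap (X := X) (Y := Y) K n i).comp (lamMap K qop hop (n+1) j)) = 0 := by
    rw [← Fintype.sum_prod_type', ← Fintype.sum_prod_type']
    rw [Fintype.sum_equiv (pairEquiv n)
      (fun p : Fin (n+1) × Fin (n+2) =>
        ((-1:K) ^ (p.2:ℕ) * (-1:K) ^ (p.1:ℕ)) •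
          (lamMap K qop hop n p.1).comp (rhoMap K (n+1) p.2))
      (fun p : Fin (n+1) × Fin (n+2) =>
        -(((-1:K) ^ (p.2:ℕ) * (-1:K) ^ (p.1:ℕ)) •
          (rhoMap (X := X) (Y := Y) K n p.1).comp (lamMap K qop hop (n+1) p.2)))
      ?_]
    · rw [← Finset.sum_add_distrib]
      refine Finset.sum_eq_zero fun p _ => ?_
      ext v
      simp
    · rintro ⟨i, j⟩
      by_cases h : (i:ℕ) < (j:ℕ)
      · rw [show pairEquiv n (i, j) = _ from pairFun_of_lt h]
        show ((-1:K) ^ (j:ℕ) * (-1:K) ^ (i:ℕ)) •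
            (lamMap K qop hop n i).comp (rhoMap K (n+1) j) =
          -(((-1:K) ^ (i:ℕ) * (-1:K) ^ ((j:ℕ)-1)) •
            (rhoMap (X := X) (Y := Y) K n ⟨(j:ℕ)-1, by have := j.isLt; omega⟩).comp
              (lamMap K qop hop (n+1) ⟨(i:ℕ), by have := i.isLt; omega⟩))
        obtain ⟨m, hm⟩ : ∃ m, (j:ℕ) = m+1 := ⟨(j:ℕ)-1, by omega⟩
        have hc : ((-1:K) ^ (j:ℕ) * (-1:K) ^ (i:ℕ)) =
            -((-1:K) ^ (i:ℕ) * (-1:K) ^ ((j:ℕ)-1)) := by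
          rw [hm]
          simp only [Nat.add_sub_cancel, pow_succ]
          ring
        rw [map_comm K qop hop i j _ _ (tup_lt qop hop i j h), hc]
        ext v
        simp
      · rw [show pairEquiv n (i, j) = _ from pairFun_of_ge h]
        show ((-1:K) ^ (j:ℕ) * (-1:K) ^ (i:ℕ)) •
            (lamMap K qop hop n i).comp (rhoMap K (n+1) j) =
          -(((-1:K) ^ ((i:ℕ)+1) * (-1:K) ^ (j:ℕ)) •
            (rhoMap (X := X) (Y := Y) K n ⟨(j:ℕ), by have := i.isLt; omega⟩).comp
              (lamMap K qop hop (n+1) i.succ))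
        have hc : ((-1:K) ^ (j:ℕ) * (-1:K) ^ (i:ℕ)) =
            -((-1:K) ^ ((i:ℕ)+1) * (-1:K) ^ (j:ℕ)) := by
          rw [pow_succ]
          ring
        rw [map_comm K qop hop i j _ _ (tup_ge qop hop i j (by omega)), hc]
        ext v
        simp
  exact key

end Stmt7
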